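/- For μ ∈ (0,1), the function g(z) = (μ√(z+4μ²) − 2μ²)/(z√(z+4μ²)) is strictly decreasing in z on z > 0; in particular, (z+4μ²)³ − (8μ³ + 3μz)² = z³ + 3z²μ² > 0 for all z > 0. -/
import Mathlib

private lemma g_form (μ : ℝ) (hμ : 0 < μ) (z : ℝ) (hz : 0 < z) :
    (μ * Real.sqrt (z + 4*μ^2) - 2*μ^2) / (z * Real.sqrt (z + 4*μ^2))
      = μ / (Real.sqrt (z + 4*μ^2) * (Real.sqrt (z + 4*μ^2) + 2*μ)) := by
  set s := Real.sqrt (z + 4*μ^2) with hsdef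
  have hzn : (0:ℝ) ≤ z + 4*μ^2 := by nlinarith
  have hs2 : s^2 = z + 4*μ^2 := Real.sq_sqrt hzn
  have hs : 2*μ < s := by
    have : Real.sqrt ((2*μ)^2) < s := by
      apply Real.sqrt_lt_sqrt (by positivity); nlinarith
    rwa [Real.sqrt_sq (by positivity)] at this
  have hspos : 0 < s := by positivity
  rw [div_eq_div_iff (by positivity) (by positivity)]
  linear_combination (μ*s) * hs2

/-- For `μ ∈ (0,1)`, the function `g(z) = (μ√(z+4μ²) − 2μ²)/(z√(z+4μ²))` is strictly
decreasing on `z > 0`; in particular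
`(z + 4μ²)³ − (8μ³ + 3μz)² = z³ + 3z²μ² > 0` for all `z > 0`. -/
theorem g_strictAnti (μ : ℝ) (hμ : μ ∈ Set.Ioo (0:ℝ) 1) :
    StrictAntiOn (fun z : ℝ =>
        (μ * Real.sqrt (z + 4*μ^2) - 2*μ^2) / (z * Real.sqrt (z + 4*μ^2)))
      (Set.Ioi 0)
    ∧ ∀ z : ℝ, 0 < z →
        (z + 4*μ^2)^3 - (8*μ^3 + 3*μ*z)^2 = z^3 + 3*z^2*μ^2
        ∧ 0 < (z + 4*μ^2)^3 - (8*μ^3 + 3*μ*z)^2 := by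
  obtain ⟨hμ0, hμ1⟩ := hμ
  constructor
  · intro x hx y hy hxy
    simp only [Set.mem_Ioi] at hx hy
    dsimp only
    rw [g_form μ hμ0 x hx, g_form μ hμ0 y hy]
    set sx := Real.sqrt (x + 4*μ^2)
    set sy := Real.sqrt (y + 4*μ^2)
    have hsx : 0 < sx := Real.sqrt_pos.2 (by nlinarith)
    have hsy : 0 < sy := Real.sqrt_pos.2 (by nlinarith)
    have hlt : sx < sy := Real.sqrt_lt_sqrt (by nlinarith) (by linarith)
    apply div_lt_div_of_pos_left hμ0 (by positivity)
    nlinarith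
  · intro z hz
    constructor
    · ring
    · have : (z + 4*μ^2)^3 - (8*μ^3 + 3*μ*z)^2 = z^3 + 3*z^2*μ^2 := by ring
      rw [this]; positivity
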